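/- For every 0 < x < π/2 one has x(1 + cos x + cos² x) ≥ sin x (1 + 2 cos x). -/

import Mathlib

open Real

private lemma g_deriv (t : ℝ) :
    HasDerivAt (fun t => 3 * Real.sin t - t * (1 + 2 * Real.cos t))
      (Real.cos t - 1 + 2 * t * Real.sin t) t := by
  have h := ((Real.hasDerivAt_sin t).const_mul 3).sub
    ((hasDerivAt_id t).mul (((Real.hasDerivAt_cos t).const_mul 2).const_add 1))
  refine h.congr_deriv ?_
  simp only [id_eq]
  ring

private lemma g_nonneg {t : ℝ} (h0 : 0 ≤ t) (h1 : t ≤ π / 2) :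
    0 ≤ 3 * Real.sin t - t * (1 + 2 * Real.cos t) := by
  have key : MonotoneOn (fun t => 3 * Real.sin t - t * (1 + 2 * Real.cos t))
      (Set.Icc 0 (π / 2)) := by
    apply monotoneOn_of_deriv_nonneg (convex_Icc _ _)
    · exact Continuous.continuousOn (by continuity)
    · intro x _
      exact (g_deriv x).differentiableAt.differentiableWithinAt
    · intro x hx
      rw [interior_Icc] at hx
      rw [(g_deriv x).deriv]
      have hc : 1 - x ^ 2 / 2 ≤ Real.cos x := Real.one_sub_sq_div_two_le_cos
      have hs : 2 / π * x ≤ Real.sin x := Real.mul_le_sin hx.1.le hx.2.le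
      have hπ : π ≤ 4 := Real.pi_le_four
      have hπ0 : 0 < π := Real.pi_pos
      have : 2 / π * x * (2 * x) ≤ Real.sin x * (2 * x) := by
        apply mul_le_mul_of_nonneg_right hs (by linarith [hx.1])
      have h4 : x ^ 2 / 2 ≤ 2 / π * x * (2 * x) := by
        rw [div_mul_eq_mul_div, div_mul_eq_mul_div, div_le_div_iff₀ two_pos hπ0]
        nlinarith [sq_nonneg x]
      nlinarith
  have := key (Set.mem_Icc.2 ⟨le_refl 0, by positivity⟩) (Set.mem_Icc.2 ⟨h0, h1⟩) h0
  simpa using this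

theorem trig_ineq_one (x : ℝ) (hx0 : 0 < x) (hx : x < π / 2) :
    x * (1 + cos x + cos x ^ 2) ≥ sin x * (1 + 2 * cos x) := by
  set f : ℝ → ℝ := fun t => t * (1 + Real.cos t + Real.cos t ^ 2)
      - Real.sin t * (1 + 2 * Real.cos t) with hf
  have hderiv : ∀ t : ℝ, HasDerivAt f
      (Real.sin t * (3 * Real.sin t - t * (1 + 2 * Real.cos t))) t := by
    intro t
    have h1 : HasDerivAt (fun t : ℝ => t * (1 + Real.cos t + Real.cos t ^ 2))
        (1 * (1 + Real.cos t + Real.cos t ^ 2)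
          + t * (-Real.sin t + 2 * Real.cos t * (-Real.sin t))) t := by
      have := (hasDerivAt_id t).mul
        (((Real.hasDerivAt_cos t).const_add 1).add ((Real.hasDerivAt_cos t).pow 2))
      refine this.congr_deriv ?_
      simp only [id_eq, Pi.add_apply, Pi.pow_apply]
      push_cast
      ring
    have h2 : HasDerivAt (fun t : ℝ => Real.sin t * (1 + 2 * Real.cos t))
        (Real.cos t * (1 + 2 * Real.cos t) + Real.sin t * (2 * -Real.sin t)) t :=
      (Real.hasDerivAt_sin t).mul (((Real.hasDerivAt_cos t).const_mul 2).const_add 1)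
    have h := h1.sub h2
    refine h.congr_deriv ?_
    have hpy := Real.sin_sq_add_cos_sq t
    nlinarith [hpy]
  have hmono : MonotoneOn f (Set.Icc 0 (π / 2)) := by
    apply monotoneOn_of_deriv_nonneg (convex_Icc _ _)
    · exact (Continuous.sub (continuous_id.mul (by continuity))
        (continuous_sin.mul (by continuity))).continuousOn
    · intro t _
      exact (hderiv t).differentiableAt.differentiableWithinAt
    · intro t ht
      rw [interior_Icc] at ht
      rw [(hderiv t).deriv]
      exact mul_nonneg (Real.sin_nonneg_of_nonneg_of_le_pi ht.1.le
        (by linarith [Real.pi_pos, ht.2])) (g_nonneg ht.1.le ht.2.le)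
  have h0 : f 0 = 0 := by simp [hf]
  have := hmono (Set.mem_Icc.2 ⟨le_refl 0, by positivity⟩)
    (Set.mem_Icc.2 ⟨hx0.le, hx.le⟩) hx0.le
  rw [h0] at this
  simp only [hf] at this
  linarith
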